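/- Let p ≥ 3 and let T be the star K_{1,p} (a tree consisting of one center adjacent to p leaves), and let G be the graph obtained from T by isomorphic leaf matching. Then G is a minimal bipartite matching covered graph satisfying m = (3n − 6)/2, i.e. 2m = 3n − 6, where n is the number of vertices and m the number of edges of G. -/

import Mathlib

open SimpleGraph

/-- The degree of a vertex `v` in a graph `G`: the number of neighbours of `v`. -/
noncomputable def degN {V : Type*} (G : SimpleGraph V) (v : V) : ℕ :=
  (G.neighborSet v).ncard

/-- A finite simple graph is matching covered if it is connected, has at least 4 vertices,
and every edge lies in some perfect matching. -/
def MatchingCovered {V : Type*} [Fintype V] (G : SimpleGraph V) : Prop :=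
  G.Connected ∧ 4 ≤ Fintype.card V ∧
    ∀ e ∈ G.edgeSet, ∃ M : G.Subgraph, M.IsPerfectMatching ∧ e ∈ M.edgeSet

/-- A matching covered graph is minimal if deleting any edge destroys the property. -/
def MinimalMatchingCovered {V : Type*} [Fintype V] (G : SimpleGraph V) : Prop :=
  MatchingCovered G ∧ ∀ e ∈ G.edgeSet, ¬ MatchingCovered (G.deleteEdges {e})

/-- The graph obtained from a tree `T` by isomorphic leaf matching: two disjoint copies of `T`
(the `inl` copy and the `inr` copy), together with an edge joining the two copies of each
leaf (degree-1 vertex) of `T`. -/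
def leafMatching {V : Type*} (T : SimpleGraph V) : SimpleGraph (V ⊕ V) where
  Adj x y :=
    match x, y with
    | Sum.inl u, Sum.inl v => T.Adj u v
    | Sum.inr u, Sum.inr v => T.Adj u v
    | Sum.inl u, Sum.inr v => u = v ∧ degN T u = 1
    | Sum.inr u, Sum.inl v => u = v ∧ degN T v = 1
  symm := by
    constructor
    rintro (u | u) (v | v) h
    · exact T.adj_symm h
    · exact ⟨h.1.symm, h.2⟩
    · exact ⟨h.1.symm, h.2⟩
    · exact T.adj_symm h
  loopless := by
    constructor
    rintro (u | u) h
    · exact T.loopless.irrefl u h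
    · exact T.loopless.irrefl u h

/-- The star `K_{1,p}`: one center vertex (`none`) adjacent to `p` leaf vertices. -/
def starGraph (p : ℕ) : SimpleGraph (Option (Fin p)) where
  Adj x y := x ≠ y ∧ (x = none ∨ y = none)
  symm := ⟨fun _ _ h => ⟨h.1.symm, h.2.symm⟩⟩
  loopless := ⟨fun _ h => h.1 rfl⟩

namespace Star8

open Sum

variable {p : ℕ}

lemma star_adj (x y : Option (Fin p)) :
    (_root_.starGraph p).Adj x y ↔ x ≠ y ∧ (x = none ∨ y = none) := Iff.rfl

lemma adj_ll (u v : Option (Fin p)) :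
    (leafMatching (_root_.starGraph p)).Adj (inl u) (inl v) ↔ (_root_.starGraph p).Adj u v := Iff.rfl

lemma adj_rr (u v : Option (Fin p)) :
    (leafMatching (_root_.starGraph p)).Adj (inr u) (inr v) ↔ (_root_.starGraph p).Adj u v := Iff.rfl

lemma adj_lr (u v : Option (Fin p)) :
    (leafMatching (_root_.starGraph p)).Adj (inl u) (inr v) ↔
      u = v ∧ degN (_root_.starGraph p) u = 1 := Iff.rfl

lemma adj_rl (u v : Option (Fin p)) :
    (leafMatching (_root_.starGraph p)).Adj (inr u) (inl v) ↔
      u = v ∧ degN (_root_.starGraph p) v = 1 := Iff.rfl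

lemma neigh_some (j : Fin p) : (_root_.starGraph p).neighborSet (some j) = {none} := by
  ext x
  constructor
  · rintro ⟨h1, h2 | h2⟩
    · exact absurd h2 (by simp)
    · simp [h2]
  · intro hx
    have : x = none := hx
    subst this
    exact ⟨by simp, Or.inr rfl⟩

lemma degN_star_some (j : Fin p) : degN (_root_.starGraph p) (some j) = 1 := by
  rw [degN, neigh_some, Set.ncard_singleton]

lemma neigh_none : (_root_.starGraph p).neighborSet none = Set.range some := by
  ext x
  simp only [mem_neighborSet, star_adj, Set.mem_range]
  constructor
  · rintro ⟨h1, _⟩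
    rcases x with _ | j
    · exact absurd rfl h1
    · exact ⟨j, rfl⟩
  · rintro ⟨j, rfl⟩
    exact ⟨by simp, Or.inl (by simp)⟩

lemma degN_star_none : degN (_root_.starGraph p) none = p := by
  rw [degN, neigh_none, ← Set.image_univ,
    Set.ncard_image_of_injective _ (Option.some_injective _), Set.ncard_univ,
    Nat.card_eq_fintype_card, Fintype.card_fin]

/-- Neighbors of `inl (some j)` in the leaf-matched star. -/
lemma G_adj_inl_some (j : Fin p) (w : Option (Fin p) ⊕ Option (Fin p)) :
    (leafMatching (_root_.starGraph p)).Adj (inl (some j)) w ↔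
      w = inl none ∨ w = inr (some j) := by
  rcases w with v | v
  · rw [adj_ll, star_adj]
    constructor
    · rintro ⟨h1, h2 | h2⟩
      · exact absurd h2 (by simp)
      · exact Or.inl (by rw [h2])
    · rintro (h | h)
      · cases h
        exact ⟨by simp, Or.inr rfl⟩
      · exact absurd h (by simp)
  · rw [adj_lr]
    constructor
    · rintro ⟨rfl, -⟩
      exact Or.inr rfl
    · rintro (h | h)
      · exact absurd h (by simp)
      · cases h
        exact ⟨rfl, degN_star_some j⟩

lemma G_adj_inr_some (j : Fin p) (w : Option (Fin p) ⊕ Option (Fin p)) :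
    (leafMatching (_root_.starGraph p)).Adj (inr (some j)) w ↔
      w = inr none ∨ w = inl (some j) := by
  rcases w with v | v
  · rw [adj_rl]
    constructor
    · rintro ⟨rfl, -⟩
      exact Or.inr rfl
    · rintro (h | h)
      · exact absurd h (by simp)
      · cases h
        exact ⟨rfl, degN_star_some j⟩
  · rw [adj_rr, star_adj]
    constructor
    · rintro ⟨h1, h2 | h2⟩
      · exact absurd h2 (by simp)
      · exact Or.inl (by rw [h2])
    · rintro (h | h)
      · cases h
        exact ⟨by simp, Or.inr rfl⟩
      · exact absurd h (by simp)

lemma G_adj_inl_none (hp : 3 ≤ p) (w : Option (Fin p) ⊕ Option (Fin p)) :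
    (leafMatching (_root_.starGraph p)).Adj (inl none) w ↔ ∃ j, w = inl (some j) := by
  rcases w with v | v
  · rw [adj_ll, star_adj]
    constructor
    · rintro ⟨h1, -⟩
      rcases v with _ | j
      · exact absurd rfl h1
      · exact ⟨j, rfl⟩
    · rintro ⟨j, h⟩
      cases h
      exact ⟨by simp, Or.inl rfl⟩
  · rw [adj_lr]
    constructor
    · rintro ⟨-, hdeg⟩
      rw [degN_star_none] at hdeg
      omega
    · rintro ⟨j, h⟩
      exact absurd h (by simp)

lemma G_adj_inr_none (hp : 3 ≤ p) (w : Option (Fin p) ⊕ Option (Fin p)) :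
    (leafMatching (_root_.starGraph p)).Adj (inr none) w ↔ ∃ j, w = inr (some j) := by
  rcases w with v | v
  · rw [adj_rl]
    constructor
    · rintro ⟨rfl, hdeg⟩
      rw [degN_star_none] at hdeg
      omega
    · rintro ⟨j, h⟩
      exact absurd h (by simp)
  · rw [adj_rr, star_adj]
    constructor
    · rintro ⟨h1, -⟩
      rcases v with _ | j
      · exact absurd rfl h1
      · exact ⟨j, rfl⟩
    · rintro ⟨j, h⟩
      cases h
      exact ⟨by simp, Or.inl rfl⟩

/-- A vertex different from a given `j : Fin p`. -/
def other (hp : 3 ≤ p) (j : Fin p) : Fin p :=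
  if j.val = 0 then ⟨1, by omega⟩ else ⟨0, by omega⟩

lemma other_ne (hp : 3 ≤ p) (j : Fin p) : other hp j ≠ j := by
  unfold other
  by_cases h : j.val = 0 <;> simp [h, Fin.ext_iff] <;> omega

/-- The matching function of the `i`-th perfect matching. -/
def fI (p : ℕ) (i : Fin p) :
    Option (Fin p) ⊕ Option (Fin p) → Option (Fin p) ⊕ Option (Fin p)
  | inl none => inl (some i)
  | inl (some j) => if j = i then inl none else inr (some j)
  | inr none => inr (some i)
  | inr (some j) => if j = i then inr none else inl (some j)

lemma fI_invol (i : Fin p) (x : Option (Fin p) ⊕ Option (Fin p)) :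
    fI p i (fI p i x) = x := by
  rcases x with (_ | j) | (_ | j)
  · simp [fI]
  · by_cases h : j = i <;> simp [fI, h]
  · simp [fI]
  · by_cases h : j = i <;> simp [fI, h]

lemma fI_adj (i : Fin p) (x : Option (Fin p) ⊕ Option (Fin p)) :
    (leafMatching (_root_.starGraph p)).Adj x (fI p i x) := by
  rcases x with (_ | j) | (_ | j)
  · exact (adj_ll _ _).mpr ⟨by simp, Or.inl rfl⟩
  · by_cases h : j = i
    · simp only [fI, if_pos h]
      exact (adj_ll _ _).mpr ⟨by simp, Or.inr rfl⟩
    · simp only [fI, if_neg h]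
      exact (adj_lr _ _).mpr ⟨rfl, degN_star_some j⟩
  · exact (adj_rr _ _).mpr ⟨by simp, Or.inl rfl⟩
  · by_cases h : j = i
    · simp only [fI, if_pos h]
      exact (adj_rr _ _).mpr ⟨by simp, Or.inr rfl⟩
    · simp only [fI, if_neg h]
      exact (adj_rl _ _).mpr ⟨rfl, degN_star_some j⟩

/-- The `i`-th perfect matching, as a subgraph. -/
def Mi (p : ℕ) (i : Fin p) : (leafMatching (_root_.starGraph p)).Subgraph where
  verts := Set.univ
  Adj x y := fI p i x = y
  adj_sub := by
    rintro x y rfl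
    exact fI_adj i x
  edge_vert := fun _ => Set.mem_univ _
  symm := by
    constructor
    rintro x y rfl
    exact (fI_invol i x)

lemma Mi_pm (i : Fin p) : (Mi p i).IsPerfectMatching :=
  ⟨fun v _ => ⟨fI p i v, rfl, fun w hw => Eq.symm hw⟩, fun v => Set.mem_univ v⟩

lemma Mi_adj (i : Fin p) (x y : Option (Fin p) ⊕ Option (Fin p)) :
    (Mi p i).Adj x y ↔ fI p i x = y := Iff.rfl

lemma covered (hp : 3 ≤ p) :
    ∀ e ∈ (leafMatching (_root_.starGraph p)).edgeSet,
      ∃ M : (leafMatching (_root_.starGraph p)).Subgraph,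
        M.IsPerfectMatching ∧ e ∈ M.edgeSet := by
  intro e he
  induction e using Sym2.ind with
  | _ x y =>
  rw [mem_edgeSet] at he
  have key : ∃ i : Fin p, fI p i x = y := by
    rcases x with (_ | j) | (_ | j) <;> rcases y with (_ | k) | (_ | k)
    · exact absurd rfl ((adj_ll _ _).mp he).1
    · exact ⟨k, rfl⟩
    · rcases (adj_lr _ _).mp he with ⟨-, hdeg⟩
      rw [degN_star_none] at hdeg; omega
    · rcases (adj_lr _ _).mp he with ⟨h, -⟩
      exact absurd h (by simp)
    · exact ⟨j, by simp [fI]⟩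
    · rcases ((adj_ll _ _).mp he).2 with h | h <;> exact absurd h (by simp)
    · rcases (adj_lr _ _).mp he with ⟨h, -⟩
      exact absurd h (by simp)
    · rcases (adj_lr _ _).mp he with ⟨h, -⟩
      cases h
      refine ⟨other hp j, ?_⟩
      simp only [fI, if_neg (fun hh : j = other hp j => (other_ne hp j) hh.symm)]
    · rcases (adj_rl _ _).mp he with ⟨-, hdeg⟩
      rw [degN_star_none] at hdeg; omega
    · rcases (adj_rl _ _).mp he with ⟨h, -⟩
      exact absurd h (by simp)
    · exact absurd rfl ((adj_rr _ _).mp he).1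
    · exact ⟨k, rfl⟩
    · rcases (adj_rl _ _).mp he with ⟨h, -⟩
      exact absurd h (by simp)
    · rcases (adj_rl _ _).mp he with ⟨h, -⟩
      cases h
      refine ⟨other hp j, ?_⟩
      simp only [fI, if_neg (fun hh : j = other hp j => (other_ne hp j) hh.symm)]
    · exact ⟨j, by simp [fI]⟩
    · rcases ((adj_rr _ _).mp he).2 with h | h <;> exact absurd h (by simp)
  obtain ⟨i, hi⟩ := key
  exact ⟨Mi p i, Mi_pm i, by rw [Subgraph.mem_edgeSet]; exact hi⟩

lemma conn (hp : 3 ≤ p) : (leafMatching (_root_.starGraph p)).Connected := by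
  rw [connected_iff_exists_forall_reachable]
  refine ⟨inl none, ?_⟩
  have hpos : 0 < p := by omega
  have h1 : ∀ j : Fin p, (leafMatching (_root_.starGraph p)).Adj (inl none) (inl (some j)) :=
    fun j => (adj_ll _ _).mpr ⟨by simp, Or.inl rfl⟩
  have h2 : ∀ j : Fin p, (leafMatching (_root_.starGraph p)).Adj (inl (some j)) (inr (some j)) :=
    fun j => (adj_lr _ _).mpr ⟨rfl, degN_star_some j⟩
  have h3 : ∀ j : Fin p, (leafMatching (_root_.starGraph p)).Adj (inr (some j)) (inr none) :=
    fun j => (adj_rr _ _).mpr ⟨by simp, Or.inr rfl⟩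
  intro w
  rcases w with (_ | j) | (_ | j)
  · exact Reachable.refl _
  · exact (h1 j).reachable
  · exact (((h1 ⟨0, hpos⟩).reachable.trans (h2 ⟨0, hpos⟩).reachable).trans
      (h3 ⟨0, hpos⟩).reachable)
  · exact (h1 j).reachable.trans (h2 j).reachable

lemma card_V : Fintype.card (Option (Fin p) ⊕ Option (Fin p)) = 2 * (p + 1) := by
  simp [Fintype.card_sum, Fintype.card_option, Fintype.card_fin]
  ring

lemma mc (hp : 3 ≤ p) : MatchingCovered (leafMatching (_root_.starGraph p)) := by
  refine ⟨conn hp, ?_, covered hp⟩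
  rw [card_V]
  omega

/-- Deleting a left star edge kills matching-coveredness. -/
lemma not_mc_a (hp : 3 ≤ p) (j : Fin p) :
    ¬ MatchingCovered
      ((leafMatching (_root_.starGraph p)).deleteEdges {s(inl none, inl (some j))}) := by
  rintro ⟨-, -, h⟩
  have he' : s(inr none, inr (some j)) ∈
      ((leafMatching (_root_.starGraph p)).deleteEdges {s(inl none, inl (some j))}).edgeSet := by
    rw [mem_edgeSet, deleteEdges_adj]
    exact ⟨(adj_rr _ _).mpr ⟨by simp, Or.inl rfl⟩, by simp⟩
  obtain ⟨M, hM, hMe⟩ := h _ he'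
  rw [Subgraph.mem_edgeSet] at hMe
  obtain ⟨w, hw, -⟩ := hM.1 (hM.2 (inl (some j)))
  have hadj := M.adj_sub hw
  rw [deleteEdges_adj] at hadj
  have hw' : w = inr (some j) := by
    rcases (G_adj_inl_some j w).mp hadj.1 with rfl | rfl
    · exact absurd (by rw [Sym2.eq_swap]; exact Set.mem_singleton _) hadj.2
    · rfl
  subst hw'
  obtain ⟨z, -, huniq⟩ := hM.1 (hM.2 (inr (some j)))
  have h1 := huniq _ hw.symm
  have h2 := huniq _ hMe.symm
  exact absurd (h1.trans h2.symm) (by simp)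

/-- Deleting a right star edge kills matching-coveredness. -/
lemma not_mc_b (hp : 3 ≤ p) (j : Fin p) :
    ¬ MatchingCovered
      ((leafMatching (_root_.starGraph p)).deleteEdges {s(inr none, inr (some j))}) := by
  rintro ⟨-, -, h⟩
  have he' : s(inl none, inl (some j)) ∈
      ((leafMatching (_root_.starGraph p)).deleteEdges {s(inr none, inr (some j))}).edgeSet := by
    rw [mem_edgeSet, deleteEdges_adj]
    exact ⟨(adj_ll _ _).mpr ⟨by simp, Or.inl rfl⟩, by simp⟩
  obtain ⟨M, hM, hMe⟩ := h _ he'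
  rw [Subgraph.mem_edgeSet] at hMe
  obtain ⟨w, hw, -⟩ := hM.1 (hM.2 (inr (some j)))
  have hadj := M.adj_sub hw
  rw [deleteEdges_adj] at hadj
  have hw' : w = inl (some j) := by
    rcases (G_adj_inr_some j w).mp hadj.1 with rfl | rfl
    · exact absurd (by rw [Sym2.eq_swap]; exact Set.mem_singleton _) hadj.2
    · rfl
  subst hw'
  obtain ⟨z, -, huniq⟩ := hM.1 (hM.2 (inl (some j)))
  have h1 := huniq _ hw.symm
  have h2 := huniq _ hMe.symm
  exact absurd (h1.trans h2.symm) (by simp)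

/-- Deleting a cross edge kills matching-coveredness. -/
lemma not_mc_c (hp : 3 ≤ p) (j : Fin p) :
    ¬ MatchingCovered
      ((leafMatching (_root_.starGraph p)).deleteEdges {s(inl (some j), inr (some j))}) := by
  rintro ⟨-, -, h⟩
  set k := other hp j with hk
  have hkj : k ≠ j := other_ne hp j
  have he' : s(inl none, inl (some k)) ∈
      ((leafMatching (_root_.starGraph p)).deleteEdges {s(inl (some j), inr (some j))}).edgeSet := by
    rw [mem_edgeSet, deleteEdges_adj]
    exact ⟨(adj_ll _ _).mpr ⟨by simp, Or.inl rfl⟩, by simp⟩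
  obtain ⟨M, hM, hMe⟩ := h _ he'
  rw [Subgraph.mem_edgeSet] at hMe
  obtain ⟨w, hw, -⟩ := hM.1 (hM.2 (inl (some j)))
  have hadj := M.adj_sub hw
  rw [deleteEdges_adj] at hadj
  have hw' : w = inl none := by
    rcases (G_adj_inl_some j w).mp hadj.1 with rfl | rfl
    · rfl
    · exact absurd (Set.mem_singleton _) hadj.2
  subst hw'
  obtain ⟨z, -, huniq⟩ := hM.1 (hM.2 (inl none))
  have h1 := huniq _ hw.symm
  have h2 := huniq _ hMe
  have : (inl (some j) : Option (Fin p) ⊕ Option (Fin p)) = inl (some k) :=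
    h1.trans h2.symm
  simp only [inl.injEq, Option.some.injEq] at this
  exact hkj this.symm

lemma minimal (hp : 3 ≤ p) :
    ∀ e ∈ (leafMatching (_root_.starGraph p)).edgeSet,
      ¬ MatchingCovered ((leafMatching (_root_.starGraph p)).deleteEdges {e}) := by
  intro e he
  induction e using Sym2.ind with
  | _ x y =>
  rw [mem_edgeSet] at he
  rcases x with (_ | j) | (_ | j) <;> rcases y with (_ | k) | (_ | k)
  · exact absurd rfl ((adj_ll _ _).mp he).1
  · exact not_mc_a hp k
  · rcases (adj_lr _ _).mp he with ⟨-, hdeg⟩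
    rw [degN_star_none] at hdeg
    omega
  · exact absurd ((adj_lr _ _).mp he).1 (by simp)
  · rw [show s(inl (some j), (inl none : Option (Fin p) ⊕ Option (Fin p)))
      = s(inl none, inl (some j)) from Sym2.eq_swap]
    exact not_mc_a hp j
  · rcases ((adj_ll _ _).mp he).2 with h | h <;> exact absurd h (by simp)
  · exact absurd ((adj_lr _ _).mp he).1 (by simp)
  · obtain ⟨h, -⟩ := (adj_lr _ _).mp he
    cases h
    exact not_mc_c hp j
  · rcases (adj_rl _ _).mp he with ⟨-, hdeg⟩
    rw [degN_star_none] at hdeg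
    omega
  · exact absurd ((adj_rl _ _).mp he).1 (by simp)
  · exact absurd rfl ((adj_rr _ _).mp he).1
  · exact not_mc_b hp k
  · exact absurd ((adj_rl _ _).mp he).1 (by simp)
  · obtain ⟨h, -⟩ := (adj_rl _ _).mp he
    cases h
    rw [show s(inr (some j), (inl (some j) : Option (Fin p) ⊕ Option (Fin p)))
      = s(inl (some j), inr (some j)) from Sym2.eq_swap]
    exact not_mc_c hp j
  · rw [show s(inr (some j), (inr none : Option (Fin p) ⊕ Option (Fin p)))
      = s(inr none, inr (some j)) from Sym2.eq_swap]
    exact not_mc_b hp j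
  · rcases ((adj_rr _ _).mp he).2 with h | h <;> exact absurd h (by simp)

lemma colorable2 : (leafMatching (_root_.starGraph p)).Colorable 2 := by
  refine ⟨SimpleGraph.Coloring.mk
    (fun x => match x with
      | inl none => 0
      | inl (some _) => 1
      | inr none => 1
      | inr (some _) => 0) ?_⟩
  rintro ((_ | j) | (_ | j)) ((_ | k) | (_ | k)) hab
  · exact absurd rfl ((adj_ll _ _).mp hab).1
  · exact (zero_ne_one : (0 : Fin 2) ≠ 1)
  · exact (zero_ne_one : (0 : Fin 2) ≠ 1)
  · exact absurd ((adj_lr _ _).mp hab).1 (by simp)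
  · exact (one_ne_zero : (1 : Fin 2) ≠ 0)
  · rcases ((adj_ll _ _).mp hab).2 with h | h <;> exact absurd h (by simp)
  · exact absurd ((adj_lr _ _).mp hab).1 (by simp)
  · exact (one_ne_zero : (1 : Fin 2) ≠ 0)
  · exact (one_ne_zero : (1 : Fin 2) ≠ 0)
  · exact absurd ((adj_rl _ _).mp hab).1 (by simp)
  · exact absurd rfl ((adj_rr _ _).mp hab).1
  · exact (one_ne_zero : (1 : Fin 2) ≠ 0)
  · exact absurd ((adj_rl _ _).mp hab).1 (by simp)
  · exact (zero_ne_one : (0 : Fin 2) ≠ 1)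
  · exact (zero_ne_one : (0 : Fin 2) ≠ 1)
  · rcases ((adj_rr _ _).mp hab).2 with h | h <;> exact absurd h (by simp)

lemma degN_G_inl_none (hp : 3 ≤ p) :
    degN (leafMatching (_root_.starGraph p)) (inl none) = p := by
  have hN : (leafMatching (_root_.starGraph p)).neighborSet (inl none)
      = Set.range (fun j : Fin p => (inl (some j) : Option (Fin p) ⊕ Option (Fin p))) := by
    ext w
    simp only [mem_neighborSet, Set.mem_range]
    rw [G_adj_inl_none hp]
    constructor
    · rintro ⟨j, rfl⟩; exact ⟨j, rfl⟩
    · rintro ⟨j, rfl⟩; exact ⟨j, rfl⟩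
  rw [degN, hN, ← Set.image_univ, Set.ncard_image_of_injective _
    (fun a b hab => by simpa using hab), Set.ncard_univ,
    Nat.card_eq_fintype_card, Fintype.card_fin]

lemma degN_G_inr_none (hp : 3 ≤ p) :
    degN (leafMatching (_root_.starGraph p)) (inr none) = p := by
  have hN : (leafMatching (_root_.starGraph p)).neighborSet (inr none)
      = Set.range (fun j : Fin p => (inr (some j) : Option (Fin p) ⊕ Option (Fin p))) := by
    ext w
    simp only [mem_neighborSet, Set.mem_range]
    rw [G_adj_inr_none hp]
    constructor
    · rintro ⟨j, rfl⟩; exact ⟨j, rfl⟩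
    · rintro ⟨j, rfl⟩; exact ⟨j, rfl⟩
  rw [degN, hN, ← Set.image_univ, Set.ncard_image_of_injective _
    (fun a b hab => by simpa using hab), Set.ncard_univ,
    Nat.card_eq_fintype_card, Fintype.card_fin]

lemma degN_G_inl_some (j : Fin p) :
    degN (leafMatching (_root_.starGraph p)) (inl (some j)) = 2 := by
  have hN : (leafMatching (_root_.starGraph p)).neighborSet (inl (some j))
      = {inl none, inr (some j)} := by
    ext w
    simp only [mem_neighborSet, Set.mem_insert_iff, Set.mem_singleton_iff]
    exact G_adj_inl_some j w
  rw [degN, hN, Set.ncard_pair (by simp)]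

lemma degN_G_inr_some (j : Fin p) :
    degN (leafMatching (_root_.starGraph p)) (inr (some j)) = 2 := by
  have hN : (leafMatching (_root_.starGraph p)).neighborSet (inr (some j))
      = {inr none, inl (some j)} := by
    ext w
    simp only [mem_neighborSet, Set.mem_insert_iff, Set.mem_singleton_iff]
    exact G_adj_inr_some j w
  rw [degN, hN, Set.ncard_pair (by simp)]

lemma edge_count (hp : 3 ≤ p) :
    2 * (leafMatching (_root_.starGraph p)).edgeSet.ncard = 6 * p := by
  classical
  have hdeg := (leafMatching (_root_.starGraph p)).sum_degrees_eq_twice_card_edges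
  have hcard : (leafMatching (_root_.starGraph p)).edgeSet.ncard
      = (leafMatching (_root_.starGraph p)).edgeFinset.card := by
    rw [Set.ncard_eq_toFinset_card']
    congr 1
  have hdv : ∀ v, (leafMatching (_root_.starGraph p)).degree v
      = degN (leafMatching (_root_.starGraph p)) v := by
    intro v
    rw [← card_neighborSet_eq_degree, degN, ← Nat.card_coe_set_eq,
      Nat.card_eq_fintype_card]
  have hsum : ∑ v, (leafMatching (_root_.starGraph p)).degree v = 6 * p := by
    rw [Fintype.sum_sum_type]
    have hL : ∑ u : Option (Fin p),
        (leafMatching (_root_.starGraph p)).degree (inl u) = 3 * p := by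
      rw [univ_option, Finset.sum_insertNone]
      simp only [hdv, degN_G_inl_none hp, degN_G_inl_some]
      rw [Finset.sum_const, Finset.card_univ, Fintype.card_fin, smul_eq_mul]
      ring
    have hR : ∑ u : Option (Fin p),
        (leafMatching (_root_.starGraph p)).degree (inr u) = 3 * p := by
      rw [univ_option, Finset.sum_insertNone]
      simp only [hdv, degN_G_inr_none hp, degN_G_inr_some]
      rw [Finset.sum_const, Finset.card_univ, Fintype.card_fin, smul_eq_mul]
      ring
    rw [hL, hR]
    ring
  rw [hcard, ← hdeg, hsum]

end Star8

/-- The graph obtained from the star `K_{1,p}`, `p ≥ 3`, by isomorphic leaf matching is a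
minimal bipartite matching covered graph with `m = (3n - 6)/2`. -/
theorem stmt8 (p : ℕ) (hp : 3 ≤ p) :
    (leafMatching (_root_.starGraph p)).Colorable 2 ∧
      MinimalMatchingCovered (leafMatching (_root_.starGraph p)) ∧
      2 * (leafMatching (_root_.starGraph p)).edgeSet.ncard + 6
        = 3 * Fintype.card (Option (Fin p) ⊕ Option (Fin p)) := by
  refine ⟨Star8.colorable2, ⟨Star8.mc hp, Star8.minimal hp⟩, ?_⟩
  rw [Star8.edge_count hp, Star8.card_V]
  ring
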